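/- Let $\{a_n\}_{n\ge 0}$ be a decreasing sequence of nonnegative real numbers with $a_0 \le U$ for some $U > 0$, satisfying $a_n \le a_{n-1}(1 - a_{n-1}/U)$ for all $n > 0$. Then $a_n \le U/(n+1)$ for all $n \ge 0$. -/

import Mathlib

/-- Barron's recursive sequence lemma (Lemma 1). -/
theorem barron_lemma (U : ℝ) (hU : 0 < U) (a : ℕ → ℝ)
    (hnn : ∀ n, 0 ≤ a n)
    (hdec : ∀ n, a (n + 1) ≤ a n)
    (h0 : a 0 ≤ U)
    (hrec : ∀ n, 0 < n → a n ≤ a (n - 1) * (1 - a (n - 1) / U)) :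
    ∀ n, a n ≤ U / (n + 1) := by
  intro n
  induction n with
  | zero => simpa using h0
  | succ n ih =>
    have hx := hnn n
    have hr := hrec (n + 1) (Nat.succ_pos n)
    simp only [Nat.add_sub_cancel] at hr
    have hcast : ((n : ℝ) + 1) > 0 := by positivity
    rcases le_or_gt (a n) (U / ((n : ℝ) + 2)) with h | h
    · calc a (n + 1) ≤ a n := hdec n
        _ ≤ U / ((n : ℝ) + 2) := h
        _ = U / ((n + 1 : ℕ) + 1) := by push_cast; ring_nf
    · have key : a n * (1 - a n / U) ≤ U / ((n : ℝ) + 2) := by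
        rw [le_div_iff₀ hcast] at ih
        have h2 : ((n : ℝ) + 2) > 0 := by positivity
        rw [div_lt_iff₀ h2] at h
        have e : a n * (1 - a n / U) = (a n * U - a n ^ 2) / U := by
          field_simp
        rw [e, div_le_div_iff₀ hU h2]
        nlinarith [mul_nonneg hx hx,
          mul_nonpos_of_nonpos_of_nonneg (by nlinarith : ((n:ℝ)+1) * a n - U ≤ 0)
            (by nlinarith : (0:ℝ) ≤ ((n:ℝ)+2) * a n - U)]
      calc a (n + 1) ≤ a n * (1 - a n / U) := hr
        _ ≤ U / ((n : ℝ) + 2) := key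
        _ = U / ((n + 1 : ℕ) + 1) := by push_cast; ring_nf
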